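/- For any word w over Σ with ι(w) ≥ 1, the sequence s ↦ ι(w^s) − ι(w^{s−1}) of growths of the universality index of powers of w is eventually periodic. -/

import Mathlib

open List

variable {α : Type*}

/-- `w` is `k`-universal: every word of length `k` over the alphabet `α`
is a scattered factor (subsequence) of `w`. -/
def IsUniversal [Fintype α] (k : ℕ) (w : List α) : Prop :=
  ∀ u : List α, u.length = k → u.Sublist w

/-- The universality index `ι(w)`: the largest `k` such that `w` is `k`-universal. -/
noncomputable def univIndex [Fintype α] (w : List α) : ℕ :=
  sSup {k | IsUniversal k w}

/-- The circular universality index `ζ(w)`: the largest `k` such that some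
conjugate of `w` is `k`-universal. -/
noncomputable def circIndex [Fintype α] (w : List α) : ℕ :=
  sSup {k | ∃ u v : List α, w = u ++ v ∧ IsUniversal k (v ++ u)}

/-- `wpow w s = w^s`, the `s`-fold concatenation of `w`. -/
def wpow (w : List α) (s : ℕ) : List α := (List.replicate s w).flatten

/-- Auxiliary (fuelled) computation of the remainder of the arch factorisation:
greedily remove the shortest prefix containing every letter of the alphabet. -/
def remAux [Fintype α] [DecidableEq α] : ℕ → List α → List α
  | 0, w => w
  | (n+1), w =>
    match (List.range' 1 w.length).find?
        (fun m => decide ((w.take m).toFinset = Finset.univ)) with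
    | none => w
    | some m => remAux n (w.drop m)

/-- `rem w = r(w)`, the remainder of the arch factorisation of `w`. -/
def rem [Fintype α] [DecidableEq α] (w : List α) : List α := remAux w.length w

/-- Auxiliary (fuelled) computation of the list of arches of `w`. -/
def archesAux [Fintype α] [DecidableEq α] : ℕ → List α → List (List α)
  | 0, _ => []
  | (n+1), w =>
    match (List.range' 1 w.length).find?
        (fun m => decide ((w.take m).toFinset = Finset.univ)) with
    | none => []
    | some m => (w.take m) :: archesAux n (w.drop m)

/-- `arches w`: the list `[arch₁(w), …, arch_{ι(w)}(w)]` of arches of `w`. -/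
def arches [Fintype α] [DecidableEq α] (w : List α) : List (List α) :=
  archesAux w.length w

/-! ### Auxiliary lemmas -/

section Aux

variable [Fintype α]

lemma isUniversal_zero (x : List α) : IsUniversal 0 x := by
  intro u hu
  rw [List.length_eq_zero_iff] at hu
  subst hu
  exact List.nil_sublist x

lemma IsUniversal.anti [Nonempty α] {x : List α} {j k : ℕ} (h : IsUniversal k x)
    (hjk : j ≤ k) : IsUniversal j x := by
  obtain ⟨a⟩ := ‹Nonempty α›
  intro u hu
  have h2 : u ++ List.replicate (k - j) a <+ x := by
    apply h
    simp [hu]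
    omega
  exact (List.sublist_append_left u _).trans h2

lemma univSet_bdd [Nonempty α] (x : List α) : BddAbove {k | IsUniversal k x} := by
  obtain ⟨a⟩ := ‹Nonempty α›
  refine ⟨x.length, fun k hk => ?_⟩
  have := hk (List.replicate k a) (by simp)
  simpa using this.length_le

lemma isUniversal_univIndex [Nonempty α] (x : List α) : IsUniversal (univIndex x) x :=
  Nat.sSup_mem ⟨0, isUniversal_zero x⟩ (univSet_bdd x)

lemma le_univIndex [Nonempty α] {x : List α} {k : ℕ} (h : IsUniversal k x) :
    k ≤ univIndex x :=
  le_csSup (univSet_bdd x) h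

lemma not_isUniversal_succ [Nonempty α] (x : List α) :
    ¬ IsUniversal (univIndex x + 1) x := by
  intro h
  have := le_univIndex h
  omega

lemma exists_not_sublist [Nonempty α] (x : List α) :
    ∃ u : List α, u.length = univIndex x + 1 ∧ ¬ u <+ x := by
  by_contra h
  push_neg at h
  exact not_isUniversal_succ x (fun u hu => h u hu)

lemma univIndex_eq [Nonempty α] {x : List α} {k : ℕ} (h1 : IsUniversal k x)
    (h2 : ¬ IsUniversal (k + 1) x) : univIndex x = k := by
  refine le_antisymm ?_ (le_univIndex h1)
  by_contra h
  push_neg at h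
  exact h2 ((isUniversal_univIndex x).anti h)

lemma univIndex_eq_zero [DecidableEq α] [Nonempty α] {x : List α}
    (h : x.toFinset ≠ Finset.univ) : univIndex x = 0 := by
  apply univIndex_eq (isUniversal_zero x)
  intro h1
  obtain ⟨b, hb⟩ : ∃ b, b ∉ x.toFinset := by
    by_contra hb
    push_neg at hb
    exact h (Finset.eq_univ_iff_forall.2 hb)
  have := h1 [b] rfl
  rw [List.singleton_sublist] at this
  exact hb (List.mem_toFinset.2 this)

/-- Characterisation of `find?` on `range'`. -/
lemma find?_range'_iff {p : ℕ → Bool} : ∀ {n s m : ℕ},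
    (List.range' s n).find? p = some m ↔
      (s ≤ m ∧ m < s + n) ∧ p m = true ∧ ∀ k, s ≤ k → k < m → p k = false := by
  intro n
  induction n with
  | zero =>
    intro s m
    simp only [List.range'_zero, List.find?_nil]
    constructor
    · intro h; simp at h
    · rintro ⟨⟨h1, h2⟩, -, -⟩; omega
  | succ n ih =>
    intro s m
    rw [List.range'_succ, List.find?_cons]
    cases hps : p s with
    | false =>
      simp only []
      rw [ih]
      constructor
      · rintro ⟨⟨h1, h2⟩, hpm, hmin⟩
        refine ⟨⟨by omega, by omega⟩, hpm, fun k hk1 hk2 => ?_⟩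
        rcases eq_or_lt_of_le hk1 with rfl | hk
        · exact hps
        · exact hmin k (by omega) hk2
      · rintro ⟨⟨h1, h2⟩, hpm, hmin⟩
        have hms : m ≠ s := by
          rintro rfl
          rw [hps] at hpm
          simp at hpm
        exact ⟨⟨by omega, by omega⟩, hpm, fun k hk1 hk2 => hmin k (by omega) hk2⟩
    | true =>
      simp only []
      constructor
      · intro h
        have : s = m := by injection h
        subst this
        exact ⟨⟨le_rfl, by omega⟩, hps, fun k hk1 hk2 => by omega⟩
      · rintro ⟨⟨h1, h2⟩, hpm, hmin⟩
        have : m = s := by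
          by_contra hms
          have := hmin s le_rfl (by omega)
          rw [hps] at this
          simp at this
        subst this
        rfl

variable [DecidableEq α]

lemma remAux_succ (n : ℕ) (w : List α) :
    remAux (n+1) w = match (List.range' 1 w.length).find?
        (fun m => decide ((w.take m).toFinset = Finset.univ)) with
    | none => w
    | some m => remAux n (w.drop m) := rfl

lemma remAux_nil (n : ℕ) : remAux n ([] : List α) = [] := by
  cases n <;> rfl

lemma remAux_eq_rem :
    ∀ (L : ℕ) (x : List α), x.length ≤ L → ∀ n, x.length ≤ n → remAux n x = rem x := by
  intro L
  induction L with
  | zero =>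
    intro x hx n hn
    have hx0 : x = [] := List.eq_nil_of_length_eq_zero (by omega)
    subst hx0
    rw [remAux_nil]
    rfl
  | succ L ih =>
    intro x hx n hn
    simp only [rem]
    cases hfind : (List.range' 1 x.length).find?
        (fun m => decide ((x.take m).toFinset = Finset.univ)) with
    | none =>
      have hxn : ∀ k, x.length ≤ k → remAux k x = x := by
        intro k hk
        cases k with
        | zero =>
          have hx0 : x = [] := List.eq_nil_of_length_eq_zero (by omega)
          subst hx0; rfl
        | succ k' =>
          rw [remAux_succ, hfind]
      rw [hxn n hn, hxn x.length le_rfl]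
    | some m =>
      have hmem := List.mem_of_find?_eq_some hfind
      rw [List.mem_range'] at hmem
      obtain ⟨i, hi, hmi⟩ := hmem
      have hm1 : 1 ≤ m := by omega
      have hmlen : m ≤ x.length := by omega
      have hdrop : (x.drop m).length ≤ L := by simp; omega
      have step : ∀ k, x.length ≤ k + 1 → remAux (k+1) x = rem (x.drop m) := by
        intro k hk
        rw [remAux_succ, hfind]
        exact ih (x.drop m) hdrop k (by simp; omega)
      obtain ⟨n', rfl⟩ : ∃ n'', n = n'' + 1 := ⟨n - 1, by omega⟩
      obtain ⟨l', hl'⟩ : ∃ l', x.length = l' + 1 := ⟨x.length - 1, by omega⟩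
      rw [step n' (by omega), hl', step l' (by omega)]

lemma rem_of_none {x : List α}
    (h : (List.range' 1 x.length).find?
        (fun m => decide ((x.take m).toFinset = Finset.univ)) = none) :
    rem x = x := by
  simp only [rem]
  rcases Nat.eq_zero_or_pos x.length with h0 | h0
  · have hx0 : x = [] := List.eq_nil_of_length_eq_zero h0
    subst hx0; rfl
  · obtain ⟨l, hl⟩ : ∃ l, x.length = l + 1 := ⟨x.length - 1, by omega⟩
    rw [hl, remAux_succ]
    rw [h]

lemma rem_of_some {x : List α} {m : ℕ}
    (h : (List.range' 1 x.length).find?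
        (fun m => decide ((x.take m).toFinset = Finset.univ)) = some m) :
    rem x = rem (x.drop m) := by
  have hmem := List.mem_of_find?_eq_some h
  rw [List.mem_range'] at hmem
  obtain ⟨i, hi, hmi⟩ := hmem
  simp only [rem]
  obtain ⟨l, hl⟩ : ∃ l, x.length = l + 1 := ⟨x.length - 1, by omega⟩
  rw [hl, remAux_succ, h]
  exact remAux_eq_rem (x.drop m).length (x.drop m) le_rfl l (by simp; omega)

lemma rem_suffix : ∀ (L : ℕ) (x : List α), x.length ≤ L → rem x <:+ x := by
  intro L
  induction L with
  | zero =>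
    intro x hx
    have hx0 : x = [] := List.eq_nil_of_length_eq_zero (by omega)
    subst hx0
    exact List.suffix_refl _
  | succ L ih =>
    intro x hx
    cases hfind : (List.range' 1 x.length).find?
        (fun m => decide ((x.take m).toFinset = Finset.univ)) with
    | none => rw [rem_of_none hfind]
    | some m =>
      have hmem := List.mem_of_find?_eq_some hfind
      rw [List.mem_range'] at hmem
      obtain ⟨i, hi, hmi⟩ := hmem
      rw [rem_of_some hfind]
      exact (ih (x.drop m) (by simp; omega)).trans (List.drop_suffix m x)

lemma exists_find?_some [Nonempty α] {x : List α} (h : x.toFinset = Finset.univ) :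
    ∃ m, (List.range' 1 x.length).find?
        (fun m => decide ((x.take m).toFinset = Finset.univ)) = some m := by
  have hx : x ≠ [] := by
    rintro rfl
    simp at h
    exact (Finset.univ_nonempty (α := α)).ne_empty h.symm
  have hlen : 1 ≤ x.length := List.length_pos_iff.2 hx
  cases hfind : (List.range' 1 x.length).find?
      (fun m => decide ((x.take m).toFinset = Finset.univ)) with
  | some m => exact ⟨m, rfl⟩
  | none =>
    exfalso
    have hmem : x.length ∈ List.range' 1 x.length := by
      rw [List.mem_range']
      exact ⟨x.length - 1, by omega, by omega⟩
    have := List.find?_eq_none.1 hfind x.length hmem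
    apply this
    simp [List.take_length, h]

lemma rem_not_univ [Nonempty α] :
    ∀ (L : ℕ) (x : List α), x.length ≤ L → (rem x).toFinset ≠ Finset.univ := by
  intro L
  induction L with
  | zero =>
    intro x hx hcon
    have hx0 : x = [] := List.eq_nil_of_length_eq_zero (by omega)
    subst hx0
    rw [show rem ([] : List α) = [] from rfl] at hcon
    simp at hcon
    exact (Finset.univ_nonempty (α := α)).ne_empty hcon.symm
  | succ L ih =>
    intro x hx
    cases hfind : (List.range' 1 x.length).find?
        (fun m => decide ((x.take m).toFinset = Finset.univ)) with
    | none =>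
      rw [rem_of_none hfind]
      intro hcon
      obtain ⟨m, hm⟩ := exists_find?_some hcon
      rw [hfind] at hm
      simp at hm
    | some m =>
      have hmem := List.mem_of_find?_eq_some hfind
      rw [List.mem_range'] at hmem
      obtain ⟨i, hi, hmi⟩ := hmem
      rw [rem_of_some hfind]
      exact ih (x.drop m) (by simp; omega)

lemma univIndex_step [Nonempty α] {x : List α} {m : ℕ}
    (hfind : (List.range' 1 x.length).find?
        (fun m => decide ((x.take m).toFinset = Finset.univ)) = some m) :
    univIndex x = univIndex (x.drop m) + 1 := by
  rw [find?_range'_iff] at hfind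
  obtain ⟨⟨hm1, hm2⟩, hpm, hmin⟩ := hfind
  have hmlen : m ≤ x.length := by omega
  have hcov : (x.take m).toFinset = Finset.univ := of_decide_eq_true hpm
  have ha : IsUniversal (univIndex (x.drop m) + 1) x := by
    intro u hu
    cases u with
    | nil => simp at hu
    | cons c u' =>
      simp only [List.length_cons] at hu
      have hc : c ∈ x.take m := by
        rw [← List.mem_toFinset, hcov]
        exact Finset.mem_univ c
      have h1 : [c] <+ x.take m := List.singleton_sublist.2 hc
      have h2 : u' <+ x.drop m := isUniversal_univIndex (x.drop m) u' (by omega)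
      have h3 := h1.append h2
      rwa [List.take_append_drop, List.singleton_append] at h3
  refine univIndex_eq ha ?_
  intro hb
  obtain ⟨u', hlen, hnsub⟩ := exists_not_sublist (x.drop m)
  have hm1' : m - 1 < x.length := by omega
  set c := x[m-1]'hm1' with hc
  have htake : x.take m = x.take (m-1) ++ [c] := by
    conv_lhs => rw [show m = (m-1)+1 by omega]
    rw [List.take_succ, List.getElem?_eq_getElem hm1']
    rfl
  have hnc : (x.take (m-1)).toFinset ≠ Finset.univ := by
    rcases Nat.eq_zero_or_pos (m-1) with h0 | h0
    · rw [h0]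
      simp
      intro hcon
      exact (Finset.univ_nonempty (α := α)).ne_empty hcon.symm
    · intro hcon
      have := hmin (m-1) h0 (by omega)
      exact (of_decide_eq_false this) hcon
  have hcnot : c ∉ x.take (m-1) := by
    intro hcmem
    apply hnc
    apply Finset.eq_univ_iff_forall.2
    intro b
    have hb' : b ∈ x.take m := by
      rw [← List.mem_toFinset, hcov]
      exact Finset.mem_univ b
    rw [htake, List.mem_append] at hb'
    rcases hb' with hb' | hb'
    · exact List.mem_toFinset.2 hb'
    · rw [List.mem_singleton] at hb'
      exact List.mem_toFinset.2 (hb' ▸ hcmem)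
  have hsub : c :: u' <+ x := hb (c :: u') (by simp [hlen])
  rw [List.cons_sublist_iff] at hsub
  obtain ⟨r₁, r₂, hx, hcr, hur⟩ := hsub
  have hr1 : r₁ = x.take r₁.length := by rw [hx, List.take_left]
  have hlen1 : m ≤ r₁.length := by
    by_contra hlt
    push_neg at hlt
    apply hcnot
    have hcm : c ∈ x.take r₁.length := hr1 ▸ hcr
    have htt : x.take r₁.length = (x.take (m-1)).take r₁.length := by
      rw [List.take_take]
      congr 1
      omega
    rw [htt] at hcm
    exact (List.take_sublist _ _).subset hcm
  have hr2 : r₂ = x.drop r₁.length := by rw [hx, List.drop_left]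
  have hdd : x.drop r₁.length = (x.drop m).drop (r₁.length - m) := by
    rw [List.drop_drop]
    congr 1
    omega
  apply hnsub
  have : u' <+ (x.drop m).drop (r₁.length - m) := by rwa [hr2, hdd] at hur
  exact this.trans (List.drop_sublist _ _)

lemma concat_key [Nonempty α] :
    ∀ (L : ℕ) (x : List α), x.length ≤ L → ∀ v : List α,
      rem (x ++ v) = rem (rem x ++ v) ∧
      univIndex (x ++ v) = univIndex x + univIndex (rem x ++ v) := by
  intro L
  induction L with
  | zero =>
    intro x hx v
    have hx0 : x = [] := List.eq_nil_of_length_eq_zero (by omega)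
    subst hx0
    have h0 : rem ([] : List α) = [] := rfl
    have hz : univIndex ([] : List α) = 0 := by
      apply univIndex_eq_zero
      simp
      intro hcon
      exact (Finset.univ_nonempty (α := α)).ne_empty hcon.symm
    simp [h0, hz]
  | succ L ih =>
    intro x hx v
    cases hfind : (List.range' 1 x.length).find?
        (fun m => decide ((x.take m).toFinset = Finset.univ)) with
    | none =>
      have hx0 : x.toFinset ≠ Finset.univ := by
        intro hcon
        obtain ⟨m, hm⟩ := exists_find?_some hcon
        rw [hfind] at hm
        simp at hm
      rw [rem_of_none hfind, univIndex_eq_zero hx0]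
      exact ⟨rfl, by omega⟩
    | some m =>
      have hfind' := find?_range'_iff.1 hfind
      obtain ⟨⟨hm1, hm2⟩, hpm, hmin⟩ := hfind'
      have hmlen : m ≤ x.length := by omega
      have hfind2 : (List.range' 1 (x ++ v).length).find?
          (fun k => decide (((x ++ v).take k).toFinset = Finset.univ)) = some m := by
        rw [find?_range'_iff]
        refine ⟨⟨hm1, by simp; omega⟩, ?_, ?_⟩
        · rw [List.take_append_of_le_length hmlen]
          exact hpm
        · intro k hk1 hk2
          rw [List.take_append_of_le_length (by omega)]
          exact hmin k hk1 hk2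
      have hdrop : (x.drop m).length ≤ L := by simp; omega
      have ihd := ih (x.drop m) hdrop v
      have hrem : rem x = rem (x.drop m) := rem_of_some hfind
      constructor
      · rw [rem_of_some hfind2, List.drop_append_of_le_length hmlen, ihd.1, hrem]
      · rw [univIndex_step hfind2, List.drop_append_of_le_length hmlen, ihd.2,
          univIndex_step hfind, hrem]
        omega

lemma rem_state [Nonempty α] {w : List α} (hw : w.toFinset = Finset.univ)
    (y : List α) : rem (y ++ w) <:+ w := by
  have hs : rem (y ++ w) <:+ y ++ w := rem_suffix (y ++ w).length _ le_rfl
  have hnc : (rem (y ++ w)).toFinset ≠ Finset.univ := rem_not_univ (y ++ w).length _ le_rfl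
  have hws : w <:+ y ++ w := List.suffix_append y w
  rcases le_total (rem (y ++ w)).length w.length with h | h
  · exact List.suffix_of_suffix_length_le hs hws h
  · exfalso
    have hwr : w <+ rem (y ++ w) := (List.suffix_of_suffix_length_le hws hs h).sublist
    apply hnc
    apply Finset.eq_univ_iff_forall.2
    intro b
    have hbw : b ∈ w := by
      rw [← List.mem_toFinset, hw]
      exact Finset.mem_univ b
    exact List.mem_toFinset.2 (hwr.subset hbw)

end Aux

lemma wpow_succ (w : List α) (s : ℕ) : wpow w (s+1) = wpow w s ++ w := by
  simp [wpow, List.replicate_succ']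

theorem growth_eventually_periodic [Fintype α] (w : List α)
    (hw : 1 ≤ univIndex w) :
    ∃ s₀ p : ℕ, 1 ≤ p ∧ ∀ s : ℕ, s₀ ≤ s →
      univIndex (wpow w (s + p)) - univIndex (wpow w (s + p - 1)) =
        univIndex (wpow w s) - univIndex (wpow w (s - 1)) := by
  classical
  have hne : Nonempty α := by
    by_contra hne
    rw [not_nonempty_iff] at hne
    have hbdd : ¬ BddAbove {k | IsUniversal k w} := by
      rintro ⟨n, hn⟩
      have hmem : IsUniversal (n+1) w := by
        intro u hu
        cases u with
        | nil => simp at hu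
        | cons a _ => exact (hne.false a).elim
      have := hn hmem
      omega
    have hz : univIndex w = 0 := by
      rw [univIndex, csSup_of_not_bddAbove hbdd, csSup_empty]
      rfl
    omega
  have hu1 : IsUniversal 1 w := (isUniversal_univIndex w).anti hw
  have hwcov : w.toFinset = Finset.univ := by
    apply Finset.eq_univ_iff_forall.2
    intro a
    exact List.mem_toFinset.2 (List.singleton_sublist.1 (hu1 [a] rfl))
  have hstep : ∀ s, rem (wpow w (s+1)) = rem (rem (wpow w s) ++ w) := by
    intro s
    rw [wpow_succ]
    exact (concat_key (wpow w s).length (wpow w s) le_rfl w).1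
  have hgrow : ∀ s, univIndex (wpow w (s+1)) =
      univIndex (wpow w s) + univIndex (rem (wpow w s) ++ w) := by
    intro s
    rw [wpow_succ]
    exact (concat_key (wpow w s).length (wpow w s) le_rfl w).2
  have hmem : ∀ s : ℕ, rem (wpow w (s+1)) ∈ w.tails.toFinset := by
    intro s
    rw [List.mem_toFinset, List.mem_tails, hstep s]
    exact rem_state hwcov _
  obtain ⟨a, _, b, _, hab, heq⟩ :=
    Finset.exists_ne_map_eq_of_card_lt_of_maps_to
      (s := Finset.range (w.tails.toFinset.card + 1)) (t := w.tails.toFinset)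
      (f := fun s => rem (wpow w (s+1)))
      (by simp) (fun s _ => hmem s)
  have key : ∃ a b : ℕ, a < b ∧ rem (wpow w (a+1)) = rem (wpow w (b+1)) := by
    rcases Ne.lt_or_gt hab with h | h
    exacts [⟨a, b, h, heq⟩, ⟨b, a, h, heq.symm⟩]
  clear hab heq
  obtain ⟨a, b, hlt, hper⟩ := key
  have hprop : ∀ k, rem (wpow w (a+1+k)) = rem (wpow w (b+1+k)) := by
    intro k
    induction k with
    | zero => simpa using hper
    | succ k ihk =>
      rw [show a+1+(k+1) = (a+1+k)+1 by omega, hstep, ihk, ← hstep,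
        show (b+1+k)+1 = b+1+(k+1) by omega]
  refine ⟨a + 2, b - a, by omega, ?_⟩
  intro s hs
  obtain ⟨k, rfl⟩ : ∃ k, s = a + 2 + k := ⟨s - (a+2), by omega⟩
  rw [show a + 2 + k + (b - a) - 1 = b+1+k by omega,
    show a + 2 + k - 1 = a+1+k by omega,
    show a + 2 + k + (b - a) = (b+1+k) + 1 by omega,
    show a + 2 + k = (a+1+k) + 1 by omega,
    hgrow (b+1+k), hgrow (a+1+k)]
  simp only [Nat.add_sub_cancel_left]
  rw [hprop k]
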